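/- Let α ∈ [0,1), let f(α) = 20 if α ∈ [0,1/2], f(α) = 25 if α ∈ (1/2,5/7], and f(α) = 7/(1−α) + 3 if α ∈ (5/7,1). Let s ≥ 1 be an integer and set n = s + ⌊3s/2⌋ + 2. If n ≥ f(α), then the A_α-spectral radius of G = K_s ∨ ((⌊3s/2⌋+2)K₁) satisfies ρ_α(G) < n − 3. -/

import Mathlib

set_option maxHeartbeats 1000000

open Finset

/-- The join `G ∨g H` of two graphs: the disjoint union together with all edges
between the two parts. -/
def SimpleGraph.gjoin {α β : Type*} (G : SimpleGraph α) (H : SimpleGraph β) :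
    SimpleGraph (α ⊕ β) where
  Adj u v := match u, v with
    | Sum.inl u, Sum.inl v => G.Adj u v
    | Sum.inr u, Sum.inr v => H.Adj u v
    | _, _ => True
  symm := ⟨fun u v => match u, v with
    | Sum.inl u, Sum.inl v => G.adj_symm
    | Sum.inr u, Sum.inr v => H.adj_symm
    | Sum.inl _, Sum.inr _ | Sum.inr _, Sum.inl _ => fun _ => trivial⟩
  loopless := ⟨fun u => by cases u <;> simp⟩

infixl:60 " ∨g " => SimpleGraph.gjoin

/-- The `A_α`-matrix `α • D(G) + (1-α) • A(G)` of a graph `G`. -/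
noncomputable def aAlphaMatrix {V : Type*} [Fintype V] [DecidableEq V]
    (α : ℝ) (G : SimpleGraph V) : Matrix V V ℝ := by
  classical
  exact α • Matrix.diagonal (fun v => (G.degree v : ℝ)) + (1 - α) • G.adjMatrix ℝ

/-- The `A_α`-spectral radius `ρ_α(G)`: the largest eigenvalue of `A_α(G)`. -/
noncomputable def rhoAlpha {V : Type*} [Fintype V] [DecidableEq V]
    (α : ℝ) (G : SimpleGraph V) : ℝ :=
  sSup (spectrum ℝ (aAlphaMatrix α G))

/-- The signless Laplacian matrix `Q(G) = D(G) + A(G)`. -/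
noncomputable def signlessLaplacian {V : Type*} [Fintype V] [DecidableEq V]
    (G : SimpleGraph V) : Matrix V V ℝ := by
  classical
  exact Matrix.diagonal (fun v => (G.degree v : ℝ)) + G.adjMatrix ℝ

/-- `q(G)`: the largest eigenvalue of the signless Laplacian matrix of `G`. -/
noncomputable def qIndex {V : Type*} [Fintype V] [DecidableEq V]
    (G : SimpleGraph V) : ℝ :=
  sSup (spectrum ℝ (signlessLaplacian G))

/-- The number of edges (the size) of a graph. -/
noncomputable def edgeCount {V : Type*} [Fintype V] [DecidableEq V]
    (G : SimpleGraph V) : ℕ := by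
  classical
  exact G.edgeFinset.card

/-- `i(G - S)`: the number of isolated vertices of the graph obtained from `G`
by deleting the vertices of `S` together with all edges incident to `S`. -/
noncomputable def isolGminus {V : Type*} [Fintype V] [DecidableEq V]
    (G : SimpleGraph V) (S : Finset V) : ℕ := by
  classical
  exact (Finset.univ.filter (fun v => v ∉ S ∧ ∀ u, G.Adj v u → u ∈ S)).card

/-- `F(n)`: the edge bound from Theorem 1.1. -/
def Fbound (n : ℕ) : ℕ :=
  if n = 6 then 9 else if n = 8 then 18 else (n - 2).choose 2 + 2

/-- `f(α)`: the order bound from Theorem 1.2. -/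
noncomputable def fAlpha (α : ℝ) : ℝ :=
  if α ≤ 1 / 2 then 20 else if α ≤ 5 / 7 then 25 else 7 / (1 - α) + 3

section Aux

open Matrix

/-- Weighted row-sum bound for the supremum of the real spectrum of an
entrywise-nonnegative matrix. -/
lemma specBound {V : Type*} [Fintype V] [DecidableEq V] (M : Matrix V V ℝ)
    (hM : ∀ i j, 0 ≤ M i j) (x : V → ℝ) (hx : ∀ i, 0 < x i) (B : ℝ) (hB0 : 0 ≤ B)
    (hB : ∀ i, M.mulVec x i ≤ B * x i) : sSup (spectrum ℝ M) ≤ B := by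
  apply Real.sSup_le _ hB0
  intro lam hlam
  rw [spectrum.mem_iff] at hlam
  have hdet : (algebraMap ℝ (Matrix V V ℝ) lam - M).det = 0 := by
    by_contra h
    exact hlam ((Matrix.isUnit_iff_isUnit_det _).2 (isUnit_iff_ne_zero.2 h))
  obtain ⟨y, hy0, hy⟩ := Matrix.exists_mulVec_eq_zero_iff.2 hdet
  have key : M *ᵥ y = lam • y := by
    have h1 := hy
    rw [Matrix.sub_mulVec, Algebra.algebraMap_eq_smul_one, Matrix.smul_mulVec,
      Matrix.one_mulVec, sub_eq_zero] at h1
    exact h1.symm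
  obtain ⟨j0, hj0⟩ : ∃ j, y j ≠ 0 := Function.ne_iff.mp hy0
  obtain ⟨i, -, hi⟩ := Finset.exists_max_image Finset.univ (fun j => |y j| / x j)
    ⟨j0, Finset.mem_univ j0⟩
  have h4 : 0 < |y i| / x i :=
    lt_of_lt_of_le (div_pos (abs_pos.2 hj0) (hx j0)) (hi j0 (Finset.mem_univ j0))
  have hyi : 0 < |y i| := by
    have := mul_pos h4 (hx i)
    rwa [div_mul_cancel₀ _ (ne_of_gt (hx i))] at this
  set r : ℝ := |y i| / x i with hr
  have hj : ∀ j, |y j| ≤ x j * r := by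
    intro j
    have := hi j (Finset.mem_univ j)
    calc |y j| = (|y j| / x j) * x j := by rw [div_mul_cancel₀ _ (ne_of_gt (hx j))]
      _ ≤ r * x j := by exact mul_le_mul_of_nonneg_right this (le_of_lt (hx j))
      _ = x j * r := mul_comm _ _
  have hmv : lam * y i = ∑ j, M i j * y j := by
    have := congrFun key i
    simp only [Matrix.mulVec, dotProduct, Pi.smul_apply, smul_eq_mul] at this
    exact this.symm
  have habs : |lam| * |y i| ≤ B * |y i| := by
    calc |lam| * |y i| = |lam * y i| := (abs_mul lam (y i)).symm
      _ = |∑ j, M i j * y j| := by rw [hmv]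
      _ ≤ ∑ j, |M i j * y j| := Finset.abs_sum_le_sum_abs _ _
      _ ≤ ∑ j, M i j * (x j * r) := by
          apply Finset.sum_le_sum
          intro j _
          rw [abs_mul, abs_of_nonneg (hM i j)]
          exact mul_le_mul_of_nonneg_left (hj j) (hM i j)
      _ = (∑ j, M i j * x j) * r := by rw [Finset.sum_mul]; congr 1; ext j; ring
      _ = (M *ᵥ x) i * r := by simp [Matrix.mulVec, dotProduct]
      _ ≤ (B * x i) * r := mul_le_mul_of_nonneg_right (hB i) (le_of_lt h4)
      _ = B * |y i| := by rw [hr, mul_assoc, mul_div_cancel₀]; exact ne_of_gt (hx i)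
  have := le_of_mul_le_mul_right habs hyi
  exact le_trans (le_abs_self lam) this

lemma mydeg {V : Type*} [Fintype V] (G : SimpleGraph V) (w : V)
    (inst : Fintype (G.neighborSet w)) [instd : DecidableRel G.Adj] :
    ((@SimpleGraph.degree V G w inst : ℕ) : ℝ) = ∑ j, if G.Adj w j then (1:ℝ) else 0 := by
  rw [Subsingleton.elim inst (G.neighborSetFintype w)]
  exact SimpleGraph.degree_eq_sum_if_adj G w

lemma sum_ite_ne_real {k : ℕ} (v : Fin k) (c : ℝ) :
    ∑ u : Fin k, (if v = u then 0 else c) = ((k:ℝ) - 1) * c := by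
  classical
  have h1 : ∀ u : Fin k, (if v = u then (0:ℝ) else c) = c - if v = u then c else 0 := by
    intro u; by_cases h : v = u <;> simp [h]
  simp only [h1]
  rw [Finset.sum_sub_distrib, Finset.sum_const, Finset.sum_ite_eq]
  simp only [Finset.mem_univ, if_pos, Finset.card_univ, Fintype.card_fin, nsmul_eq_mul]
  ring

section Rows

variable (s m : ℕ) (α : ℝ)

private lemma gadj_ll (v u : Fin s) :
    ((⊤ : SimpleGraph (Fin s)) ∨g (⊥ : SimpleGraph (Fin m))).Adj (Sum.inl v) (Sum.inl u) ↔
      v ≠ u := Iff.rfl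

private lemma gadj_lr (v : Fin s) (u : Fin m) :
    ((⊤ : SimpleGraph (Fin s)) ∨g (⊥ : SimpleGraph (Fin m))).Adj (Sum.inl v) (Sum.inr u) ↔
      True := Iff.rfl

private lemma gadj_rl (v : Fin m) (u : Fin s) :
    ((⊤ : SimpleGraph (Fin s)) ∨g (⊥ : SimpleGraph (Fin m))).Adj (Sum.inr v) (Sum.inl u) ↔
      True := Iff.rfl

private lemma gadj_rr (v u : Fin m) :
    ((⊤ : SimpleGraph (Fin s)) ∨g (⊥ : SimpleGraph (Fin m))).Adj (Sum.inr v) (Sum.inr u) ↔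
      False := Iff.rfl

private lemma row_inl (v : Fin s) :
    (aAlphaMatrix α ((⊤ : SimpleGraph (Fin s)) ∨g (⊥ : SimpleGraph (Fin m))) *ᵥ
        Sum.elim (fun _ => (2:ℝ)) (fun _ => 1)) (Sum.inl v)
      = α * ((((s:ℝ) - 1) + m) * 2) + (1 - α) * (((s:ℝ) - 1) * 2 + (m:ℝ)) := by
  classical
  simp only [aAlphaMatrix, Matrix.add_mulVec, Pi.add_apply, Matrix.smul_mulVec,
    Pi.smul_apply, smul_eq_mul, Matrix.mulVec_diagonal, mydeg,
    SimpleGraph.adjMatrix_mulVec_apply, SimpleGraph.neighborFinset_eq_filter,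
    Finset.sum_filter, Fintype.sum_sum_type, Sum.elim_inl, Sum.elim_inr]
  simp only [gadj_ll, gadj_lr, if_true, ne_eq, ite_not, sum_ite_ne_real,
    Finset.sum_const, Finset.card_univ, Fintype.card_fin, nsmul_eq_mul, mul_one]
  try ring

private lemma row_inr (v : Fin m) :
    (aAlphaMatrix α ((⊤ : SimpleGraph (Fin s)) ∨g (⊥ : SimpleGraph (Fin m))) *ᵥ
        Sum.elim (fun _ => (2:ℝ)) (fun _ => 1)) (Sum.inr v)
      = α * (s:ℝ) + (1 - α) * ((s:ℝ) * 2) := by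
  classical
  simp only [aAlphaMatrix, Matrix.add_mulVec, Pi.add_apply, Matrix.smul_mulVec,
    Pi.smul_apply, smul_eq_mul, Matrix.mulVec_diagonal, mydeg,
    SimpleGraph.adjMatrix_mulVec_apply, SimpleGraph.neighborFinset_eq_filter,
    Finset.sum_filter, Fintype.sum_sum_type, Sum.elim_inl, Sum.elim_inr]
  simp only [gadj_rl, gadj_rr, if_true, if_false,
    Finset.sum_const, Finset.card_univ, Fintype.card_fin, nsmul_eq_mul, mul_one,
    Finset.sum_const_zero, add_zero]
  try ring

private lemma entries_nonneg (hα0 : 0 ≤ α) (hα1 : α < 1)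
    (i j : Fin s ⊕ Fin m) :
    0 ≤ aAlphaMatrix α ((⊤ : SimpleGraph (Fin s)) ∨g (⊥ : SimpleGraph (Fin m))) i j := by
  classical
  have h1 : (0:ℝ) ≤ 1 - α := by linarith
  simp only [aAlphaMatrix, Matrix.add_apply, Matrix.smul_apply, smul_eq_mul,
    Matrix.diagonal_apply, SimpleGraph.adjMatrix_apply]
  split_ifs <;> positivity

end Rows

end Aux

theorem rhoAlpha_case22_lt (α : ℝ) (hα0 : 0 ≤ α) (hα1 : α < 1)
    (s n : ℕ) (hs : 1 ≤ s) (hn : n = s + 3 * s / 2 + 2) (hfn : fAlpha α ≤ (n : ℝ)) :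
    rhoAlpha α ((⊤ : SimpleGraph (Fin s)) ∨g (⊥ : SimpleGraph (Fin (3 * s / 2 + 2))))
      < (n : ℝ) - 3 := by
  classical
  set m : ℕ := 3 * s / 2 + 2 with hm
  set S : ℝ := (s : ℝ) with hS
  set Mr : ℝ := (m : ℝ) with hMr
  set N : ℝ := (n : ℝ) with hN
  -- basic integer relations, cast to ℝ
  have hnat1 : 3 * s + 3 ≤ 2 * m := by omega
  have hnat2 : 2 * m ≤ 3 * s + 4 := by omega
  have hnat3 : n = s + m := by omega
  have hNSM : N = S + Mr := by rw [hN, hS, hMr, hnat3]; push_cast; ring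
  have h1 : 3 * S + 3 ≤ 2 * Mr := by
    rw [hS, hMr]; exact_mod_cast hnat1
  have h2 : 2 * Mr ≤ 3 * S + 4 := by
    rw [hS, hMr]; exact_mod_cast hnat2
  have hS1 : (1:ℝ) ≤ S := by rw [hS]; exact_mod_cast hs
  have hS0 : (0:ℝ) ≤ S := by linarith
  have hα1' : (0:ℝ) < 1 - α := by linarith
  -- key inequalities
  have hkey : 4 < (1 - α) * Mr ∧ S * (2 - α) < N - 3 := by
    rcases le_or_gt α (1/2) with hc1 | hc1
    · have hfn20 : (20:ℝ) ≤ N := by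
        rw [fAlpha, if_pos hc1] at hfn; exact hfn
      constructor
      · nlinarith [mul_nonneg (show (0:ℝ) ≤ 1/2 - α by linarith)
          (show (0:ℝ) ≤ Mr by linarith)]
      · nlinarith [mul_nonneg hα0 hS0]
    · rcases le_or_gt α (5/7) with hc2 | hc2
      · have hfn25 : (25:ℝ) ≤ N := by
          rw [fAlpha, if_neg (not_le.2 hc1), if_pos hc2] at hfn; exact hfn
        constructor
        · nlinarith [mul_nonneg (show (0:ℝ) ≤ (1 - α) - 2/7 by linarith)
            (show (0:ℝ) ≤ Mr by linarith)]
        · nlinarith [mul_nonneg (show (0:ℝ) ≤ α - 1/2 by linarith) hS0]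
      · have hfn3 : 7 / (1 - α) + 3 ≤ N := by
          rw [fAlpha, if_neg (not_le.2 hc1), if_neg (not_le.2 hc2)] at hfn; exact hfn
        have h7 : 7 ≤ (1 - α) * (N - 3) := by
          have := (div_le_iff₀ hα1').mp (by linarith : 7 / (1 - α) ≤ N - 3)
          linarith [this]
        have hN3 : (0:ℝ) < N - 3 := by nlinarith
        have hN27 : (27:ℝ) ≤ N := by
          nlinarith [mul_pos (show (0:ℝ) < 2/7 - (1 - α) by linarith) hN3]
        constructor
        · have h8 : 4 * (N - 3) < 7 * Mr := by nlinarith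
          nlinarith [mul_lt_mul_of_pos_left h8 hα1']
        · nlinarith [mul_nonneg hS0 (show (0:ℝ) ≤ 2/7 - (1 - α) by linarith)]
  obtain ⟨hM4, hS2⟩ := hkey
  -- bounds
  set b1 : ℝ := α * (N - 1) + (1 - α) * ((S - 1) + Mr / 2) with hb1def
  set b2 : ℝ := α * S + (1 - α) * (S * 2) with hb2def
  set B : ℝ := max b1 b2 with hBdef
  have hb1 : b1 < N - 3 := by rw [hb1def]; nlinarith
  have hb2 : b2 < N - 3 := by rw [hb2def]; nlinarith
  have hb2nn : (0:ℝ) ≤ b2 := by rw [hb2def]; nlinarith [mul_nonneg hα0 hS0]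
  have hB0 : (0:ℝ) ≤ B := le_trans hb2nn (le_max_right _ _)
  have hBlt : B < N - 3 := max_lt hb1 hb2
  rw [rhoAlpha]
  refine lt_of_le_of_lt (specBound _ (entries_nonneg s m α hα0 hα1)
    (Sum.elim (fun _ => (2:ℝ)) (fun _ => 1)) ?_ B hB0 ?_) hBlt
  · rintro (v | v) <;> norm_num
  · rintro (v | v)
    · rw [row_inl s m α v]
      have hx2 : Sum.elim (fun _ => (2:ℝ)) (fun _ => (1:ℝ)) (Sum.inl v : Fin s ⊕ Fin m) = 2 := rfl
      rw [hx2]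
      have hle : b1 ≤ B := le_max_left _ _
      have : α * (((S - 1) + Mr) * 2) + (1 - α) * ((S - 1) * 2 + Mr) = 2 * b1 := by
        rw [hb1def, hNSM]; ring
      rw [this]; linarith
    · rw [row_inr s m α v]
      have hx1 : Sum.elim (fun _ => (2:ℝ)) (fun _ => (1:ℝ)) (Sum.inr v : Fin s ⊕ Fin m) = 1 := rfl
      rw [hx1]
      have hle : b2 ≤ B := le_max_right _ _
      rw [hb2def] at hle; linarith
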